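/- Let K be a field, S = K[x_1,…,x_n], and let I ⊆ S be the LP-polymatroidal ideal of type (α,β). Then for 1 ≤ s ≤ t ≤ n, the prime P_{[s,t]} = (x_s,…,x_t) is an associated prime of S/I if and only if α_i < β_i for all i = s,…,t−1, and β_{s−1} < β_s, β_{s−1} < α_t, and α_{t−1} < α_t, with the conventions α_0 = β_0 = 0. In particular, (x_t) ∈ Ass(S/I) if and only if α_t > β_{t−1}. -/

import Mathlib

open Finset MvPolynomial

/-- The partial sum `u_1 + ⋯ + u_i` of a vector `u ∈ ℕ^n` (`i = 0, 1, …, n`). -/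
def psum {n : ℕ} (u : Fin n → ℕ) (i : ℕ) : ℕ :=
  ∑ j ∈ Finset.univ.filter (fun j : Fin n => (j : ℕ) < i), u j

namespace LPaux

section Comb
variable {n d : ℕ} {α β : ℕ → ℕ}

lemma psum_zero (u : Fin n → ℕ) : psum u 0 = 0 := by simp [_root_.psum]

lemma psum_succ (u : Fin n → ℕ) {i : ℕ} (h : i < n) :
    psum u (i + 1) = psum u i + u ⟨i, h⟩ := by
  unfold _root_.psum
  have he : Finset.univ.filter (fun j : Fin n => (j : ℕ) < i + 1)
      = insert ⟨i, h⟩ (Finset.univ.filter (fun j : Fin n => (j : ℕ) < i)) := by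
    ext j
    simp only [Finset.mem_filter, Finset.mem_insert, Finset.mem_univ, true_and, Fin.ext_iff]
    omega
  rw [he, Finset.sum_insert (by simp)]
  ring

lemma psum_mono (u : Fin n → ℕ) : Monotone (psum u) := by
  intro a b hab
  exact Finset.sum_le_sum_of_subset (by
    intro j hj
    simp only [Finset.mem_filter, Finset.mem_univ, true_and] at hj ⊢
    omega)

lemma psum_split (u : Fin n → ℕ) {a b : ℕ} (hab : a ≤ b) :
    psum u b = psum u a +
      ∑ j ∈ Finset.univ.filter (fun j : Fin n => a ≤ (j : ℕ) ∧ (j : ℕ) < b), u j := by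
  unfold _root_.psum
  rw [← Finset.sum_union (by
    rw [Finset.disjoint_filter]
    intro j _ hj hj'
    omega)]
  congr 1
  ext j
  simp only [Finset.mem_filter, Finset.mem_union, Finset.mem_univ, true_and]
  omega

lemma psum_diff_le {u w : Fin n → ℕ} (h : ∀ j, u j ≤ w j) {a b : ℕ} (hab : a ≤ b) :
    psum u b + psum w a ≤ psum u a + psum w b := by
  rw [psum_split u hab, psum_split w hab]
  have := Finset.sum_le_sum (s := Finset.univ.filter
    (fun j : Fin n => a ≤ (j : ℕ) ∧ (j : ℕ) < b)) (fun j _ => h j)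
  omega

/-- Lemma M : domination criterion. -/
lemma dom_iff (hα0 : α 0 = 0) (hβ0 : β 0 = 0)
    (hαm : ∀ i, i < n → α i ≤ α (i + 1)) (hβm : ∀ i, i < n → β i ≤ β (i + 1))
    (hαn : α n = d) (hβn : β n = d) (hαβ : ∀ i, i ≤ n → α i ≤ β i)
    (w : Fin n → ℕ) :
    (∃ u : Fin n → ℕ,
        (∀ i : ℕ, 1 ≤ i → i ≤ n → α i ≤ psum u i ∧ psum u i ≤ β i) ∧ ∀ j, u j ≤ w j) ↔
      ∀ a b : ℕ, a ≤ b → b ≤ n → α b + psum w a ≤ β a + psum w b := by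
  constructor
  · rintro ⟨u, hu, hle⟩ a b hab hbn
    have h1 : α b ≤ psum u b := by
      rcases Nat.eq_zero_or_pos b with hb | hb
      · subst hb; rw [hα0]; omega
      · exact (hu b hb hbn).1
    have h2 : psum u a ≤ β a := by
      rcases Nat.eq_zero_or_pos a with ha | ha
      · subst ha; rw [psum_zero, hβ0]
      · exact (hu a ha (hab.trans hbn)).2
    have h3 := psum_diff_le hle hab
    omega
  · intro H
    set ρ : ℕ → ℕ := psum w with hρ
    have hρm : Monotone ρ := psum_mono w
    set τ : ℕ → ℕ := fun i => (Finset.range (i + 1)).inf'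
      (by simp) (fun j => β j + (ρ i - ρ j)) with hτ
    have hτ_le : ∀ j i : ℕ, j ≤ i → τ i ≤ β j + (ρ i - ρ j) := by
      intro j i hji
      exact Finset.inf'_le _ (by simp; omega)
    have hτα : ∀ i : ℕ, i ≤ n → α i ≤ τ i := by
      intro i hin
      apply Finset.le_inf'
      intro j hj
      simp only [Finset.mem_range] at hj
      have h1 := H j i (by omega) hin
      have h2 : ρ j ≤ ρ i := hρm (by omega)
      omega
    have hτβ : ∀ i : ℕ, τ i ≤ β i := by
      intro i
      have := hτ_le i i le_rfl
      omega
    have hτmono : ∀ i : ℕ, i < n → τ i ≤ τ (i + 1) := by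
      intro i hin
      apply Finset.le_inf'
      intro j hj
      simp only [Finset.mem_range] at hj
      rcases Nat.lt_or_ge j (i + 1) with hj' | hj'
      · have h1 := hτ_le j i (by omega)
        have h2 : ρ i ≤ ρ (i + 1) := hρm (by omega)
        have h3 : ρ j ≤ ρ i := hρm (by omega)
        omega
      · have : j = i + 1 := by omega
        subst this
        have h1 := hτβ i
        have h2 := hβm i hin
        omega
    have hτstep : ∀ (i : ℕ) (h : i < n), τ (i + 1) ≤ τ i + w ⟨i, h⟩ := by
      intro i h
      obtain ⟨j0, hj0, hj0e⟩ := Finset.exists_mem_eq_inf' (s := Finset.range (i + 1))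
        (by simp) (fun j => β j + (ρ i - ρ j))
      simp only [Finset.mem_range] at hj0
      have h1 := hτ_le j0 (i + 1) (by omega)
      have h2 : ρ (i + 1) = ρ i + w ⟨i, h⟩ := psum_succ w h
      have h3 : ρ j0 ≤ ρ i := hρm (by omega)
      have h4 : τ i = β j0 + (ρ i - ρ j0) := hj0e
      omega
    have hτ0 : τ 0 = 0 := by
      have h1 : τ 0 ≤ β 0 + (ρ 0 - ρ 0) := hτ_le 0 0 le_rfl
      rw [hβ0] at h1
      omega
    refine ⟨fun k => τ (k + 1) - τ k, ?_, ?_⟩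
    · have hps : ∀ i : ℕ, i ≤ n → psum (fun k : Fin n => τ (k + 1) - τ k) i = τ i := by
        intro i
        induction i with
        | zero => intro _; rw [psum_zero, hτ0]
        | succ i ih =>
          intro hin
          rw [psum_succ _ (show i < n by omega), ih (by omega)]
          have := hτmono i (by omega)
          dsimp only
          omega
      intro i h1 h2
      rw [hps i h2]
      exact ⟨hτα i h2, hτβ i⟩
    · intro k
      have h1 := hτstep k.1 k.2
      have h2 := hτmono k.1 k.2
      have h3 : ρ (k.1 + 1) = ρ k.1 + w ⟨k.1, k.2⟩ := psum_succ w k.2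
      simp only [Fin.eta] at h1 h3
      dsimp only
      omega


/-- Forward combinatorial lemma -/
lemma forward_comb (σ : ℕ → ℕ) (hσm : Monotone σ)
    {s t : ℕ} (hs : 1 ≤ s) (hst : s ≤ t) (htn : t ≤ n)
    (hi : ¬ ∀ a b : ℕ, a ≤ b → b ≤ n → α b + σ a ≤ β a + σ b)
    (hii : ∀ J, s ≤ J → J ≤ t → ∀ a b : ℕ, a ≤ b → b ≤ n →
        α b + (σ a + (if J ≤ a then 1 else 0)) ≤ β a + (σ b + (if J ≤ b then 1 else 0)))
    (hiii : ∀ J, 1 ≤ J → J ≤ n → (J < s ∨ t < J) →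
        ¬ ∀ a b : ℕ, a ≤ b → b ≤ n →
          α b + (σ a + (if J ≤ a then 1 else 0)) ≤ β a + (σ b + (if J ≤ b then 1 else 0))) :
    (∀ i : ℕ, s ≤ i → i < t → α i < β i) ∧
      β (s - 1) < β s ∧ β (s - 1) < α t ∧ α (t - 1) < α t := by
  -- no violation when a ≥ s
  have hB : ∀ a b : ℕ, a ≤ b → b ≤ n → s ≤ a → α b + σ a ≤ β a + σ b := by
    intro a b hab hbn hsa
    have := hii s le_rfl hst a b hab hbn
    rw [if_pos hsa, if_pos (hsa.trans hab)] at this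
    omega
  -- no violation when b < t
  have hB2 : ∀ a b : ℕ, a ≤ b → b ≤ n → b < t → α b + σ a ≤ β a + σ b := by
    intro a b hab hbn hbt
    have := hii t hst le_rfl a b hab hbn
    rw [if_neg (by omega), if_neg (by omega)] at this
    omega
  -- violations are by at most one
  have hB3 : ∀ a b : ℕ, a ≤ b → b ≤ n → α b + σ a ≤ β a + σ b + 1 := by
    intro a b hab hbn
    rcases Nat.lt_or_ge a s with h | h
    · have := hii s le_rfl hst a b hab hbn
      rw [if_neg (by omega)] at this
      split_ifs at this <;> omega
    · have := hB a b hab hbn h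
      omega
  -- structure of violating pairs
  have hV : ∀ a b : ℕ, a ≤ b → b ≤ n → β a + σ b < α b + σ a →
      a < s ∧ t ≤ b ∧ α b + σ a = β a + σ b + 1 := by
    intro a b hab hbn hv
    have h1 : a < s := by
      by_contra h
      have := hB a b hab hbn (by omega)
      omega
    have h2 : t ≤ b := by
      by_contra h
      have := hB2 a b hab hbn (by omega)
      omega
    exact ⟨h1, h2, by have := hB3 a b hab hbn; omega⟩
  -- K1 : a violating pair with a = s - 1
  have K1 : ∃ b1 : ℕ, t ≤ b1 ∧ b1 ≤ n ∧ α b1 + σ (s-1) = β (s-1) + σ b1 + 1 := by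
    rcases Nat.eq_or_lt_of_le hs with h1s | h2s
    · push_neg at hi
      obtain ⟨a, b, hab, hbn, hv⟩ := hi
      obtain ⟨h1, h2, h3⟩ := hV a b hab hbn hv
      have : a = 0 := by omega
      subst this
      exact ⟨b, h2, hbn, by rw [show s - 1 = 0 by omega]; exact h3⟩
    · have := hiii (s-1) (by omega) (by omega) (Or.inl (by omega))
      push_neg at this
      obtain ⟨a, b, hab, hbn, hv⟩ := this
      rcases Nat.lt_or_ge a (s-1) with ha | ha
      · rw [if_neg (show ¬ (s - 1 ≤ a) by omega)] at hv
        have hv' : β a + σ b < α b + σ a := by split_ifs at hv <;> omega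
        obtain ⟨h1, h2, h3⟩ := hV a b hab hbn hv'
        rw [if_pos (show s - 1 ≤ b by omega)] at hv
        omega
      · rw [if_pos ha] at hv
        have hbs : s - 1 ≤ b := le_trans ha hab
        rw [if_pos hbs] at hv
        have hv' : β a + σ b < α b + σ a := by omega
        obtain ⟨h1, h2, h3⟩ := hV a b hab hbn hv'
        have : a = s - 1 := by omega
        subst this
        exact ⟨b, h2, hbn, h3⟩
  -- K2 : a violating pair with b = t
  have K2 : ∃ a2 : ℕ, a2 < s ∧ α t + σ a2 = β a2 + σ t + 1 := by
    rcases Nat.eq_or_lt_of_le htn with h1t | h2t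
    · obtain ⟨b1, hb1, hb1n, he⟩ := K1
      have : b1 = t := by omega
      subst this
      exact ⟨s - 1, by omega, he⟩
    · have := hiii (t+1) (by omega) (by omega) (Or.inr (by omega))
      push_neg at this
      obtain ⟨a, b, hab, hbn, hv⟩ := this
      rcases Nat.lt_or_ge a (t+1) with ha | ha
      · rw [if_neg (show ¬ (t + 1 ≤ a) by omega)] at hv
        have hv' : β a + σ b < α b + σ a := by split_ifs at hv <;> omega
        obtain ⟨h1, h2, h3⟩ := hV a b hab hbn hv'
        have hbt : b = t := by
          by_contra h
          rw [if_pos (show t + 1 ≤ b by omega)] at hv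
          omega
        subst hbt
        exact ⟨a, h1, h3⟩
      · rw [if_pos ha, if_pos (le_trans ha hab)] at hv
        have hv' : β a + σ b < α b + σ a := by omega
        obtain ⟨h1, _, _⟩ := hV a b hab hbn hv'
        omega
  obtain ⟨b1, hb1t, hb1n, he1⟩ := K1
  obtain ⟨a2, ha2, he2⟩ := K2
  -- the key equality at (s-1, t)
  have hE : α t + σ (s-1) = β (s-1) + σ t + 1 := by
    have h1 := hB3 (s-1) t (by omega) htn
    have h2 := hB3 a2 b1 (by omega) hb1n
    omega
  have hm1 : σ (s-1) ≤ σ s := hσm (by omega)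
  have hm2 : σ (t-1) ≤ σ t := hσm (by omega)
  have hm3 : σ (s-1) ≤ σ t := hσm (by omega)
  refine ⟨?_, ?_, by omega, ?_⟩
  · intro i hsi hit
    have h1 := hB i t hit.le htn hsi
    have h2 := hB2 (s-1) i (by omega) (by omega) hit
    omega
  · have h1 := hB s t hst htn le_rfl
    omega
  · have h1 := hB2 (s-1) (t-1) (by omega) (by omega) (by omega)
    omega

lemma mono_chain {γ : ℕ → ℕ} (h : ∀ i, i < n → γ i ≤ γ (i + 1)) :
    ∀ a b : ℕ, a ≤ b → b ≤ n → γ a ≤ γ b := by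
  intro a b
  induction b with
  | zero => intro hab _; rw [Nat.le_zero.mp hab]
  | succ b ih =>
    intro hab hbn
    rcases Nat.eq_or_lt_of_le hab with h1 | h1
    · rw [h1]
    · exact le_trans (ih (by omega) (by omega)) (h b (by omega))

lemma backward_comb (hα0 : α 0 = 0) (hβ0 : β 0 = 0)
    (hαm : ∀ i, i < n → α i ≤ α (i + 1)) (hβm : ∀ i, i < n → β i ≤ β (i + 1))
    (hαn : α n = d) (hβn : β n = d) (hαβ : ∀ i, i ≤ n → α i ≤ β i)
    {s t : ℕ} (hs : 1 ≤ s) (hst : s ≤ t) (htn : t ≤ n)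
    (hA : ∀ i : ℕ, s ≤ i → i < t → α i < β i) (hB : β (s - 1) < β s)
    (hC : β (s - 1) < α t) (hD : α (t - 1) < α t) :
    ∃ v : Fin n → ℕ,
      (∀ J : ℕ, s ≤ J → J ≤ t → ∀ i : ℕ, 1 ≤ i → i ≤ n →
        α i ≤ psum v i + (if J ≤ i then 1 else 0) ∧
          psum v i + (if J ≤ i then 1 else 0) ≤ β i) ∧
      psum v n + 1 = d ∧
      (∀ u : Fin n → ℕ, (∀ i : ℕ, 1 ≤ i → i ≤ n → α i ≤ psum u i ∧ psum u i ≤ β i) →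
        ∃ j : Fin n, s ≤ (j : ℕ) + 1 ∧ (j : ℕ) + 1 ≤ t ∧ v j < u j) := by
  set σ : ℕ → ℕ := fun i =>
    if i < s then β i else if i < t then β (s - 1) + (α i - β (s - 1)) else α i - 1 with hσ
  have hσ1 : ∀ i : ℕ, i < s → σ i = β i := by
    intro i h; simp only [hσ, if_pos h]
  have hσ2 : ∀ i : ℕ, s ≤ i → i < t → σ i = β (s - 1) + (α i - β (s - 1)) := by
    intro i h1 h2
    simp only [hσ, if_neg (show ¬ i < s by omega), if_pos h2]
  have hσ3 : ∀ i : ℕ, t ≤ i → σ i = α i - 1 := by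
    intro i h1
    simp only [hσ, if_neg (show ¬ i < s by omega), if_neg (show ¬ i < t by omega)]
  have hσ0 : σ 0 = 0 := by rw [hσ1 0 (by omega), hβ0]
  have hαt1 : 1 ≤ α t := by omega
  have hstep : ∀ i : ℕ, i < n → σ i ≤ σ (i + 1) := by
    intro i hin
    have hβi := hβm i hin
    have hαi := hαm i hin
    rcases Nat.lt_or_ge (i + 1) s with h1 | h1
    · rw [hσ1 i (by omega), hσ1 (i + 1) h1]; exact hβi
    · rcases Nat.lt_or_ge i s with h2 | h2
      · -- i = s - 1
        have hi : i = s - 1 := by omega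
        rcases Nat.lt_or_ge (i + 1) t with h3 | h3
        · rw [hσ1 i h2, hσ2 (i + 1) (by omega) h3, hi]
          omega
        · -- i + 1 = t = s
          have ht : i + 1 = t := by omega
          rw [hσ1 i h2, hσ3 (i + 1) (by omega), ht, hi]
          omega
      · rcases Nat.lt_or_ge (i + 1) t with h3 | h3
        · rw [hσ2 i h2 (by omega), hσ2 (i + 1) (by omega) h3]
          omega
        · rcases Nat.lt_or_ge i t with h4 | h4
          · -- i = t - 1
            have ht : i + 1 = t := by omega
            have hi : i = t - 1 := by omega
            rw [hσ2 i h2 h4, hσ3 (i + 1) (by omega), ht, hi]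
            omega
          · rw [hσ3 i h4, hσ3 (i + 1) (by omega)]
            omega
  have hchain : ∀ a b : ℕ, a ≤ b → b ≤ n → σ a ≤ σ b := mono_chain hstep
  have hβchain : ∀ a b : ℕ, a ≤ b → b ≤ n → β a ≤ β b := mono_chain hβm
  have hαchain : ∀ a b : ℕ, a ≤ b → b ≤ n → α a ≤ α b := mono_chain hαm
  have hpsum : ∀ i : ℕ, i ≤ n → psum (fun k : Fin n => σ (k + 1) - σ k) i = σ i := by
    intro i
    induction i with
    | zero => intro _; rw [psum_zero, hσ0]
    | succ i ih =>
      intro hin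
      rw [psum_succ _ (show i < n by omega), ih (by omega)]
      have := hstep i (by omega)
      dsimp only
      omega
  refine ⟨fun k => σ (k + 1) - σ k, ?_, ?_, ?_⟩
  · intro J hsJ hJt i h1 hin
    rw [hpsum i hin]
    rcases Nat.lt_or_ge i s with h2 | h2
    · rw [if_neg (show ¬ J ≤ i by omega), hσ1 i h2]
      have := hαβ i hin
      omega
    · rcases Nat.lt_or_ge i t with h3 | h3
      · rw [hσ2 i h2 h3]
        have hai := hA i h2 h3
        have hb := hβchain s i h2 hin
        split_ifs <;> omega
      · rw [if_pos (by omega), hσ3 i h3]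
        have h4 := hαchain t i h3 hin
        have h5 := hαβ i hin
        omega
  · rw [hpsum n le_rfl, hσ3 n htn, hαn]
    have := hαchain t n htn le_rfl
    omega
  · intro u hu
    by_contra hcon
    push_neg at hcon
    have hle : ∑ j ∈ Finset.univ.filter
          (fun j : Fin n => s - 1 ≤ (j : ℕ) ∧ (j : ℕ) < t), u j ≤
        ∑ j ∈ Finset.univ.filter
          (fun j : Fin n => s - 1 ≤ (j : ℕ) ∧ (j : ℕ) < t),
          (fun k : Fin n => σ (k + 1) - σ k) j := by
      apply Finset.sum_le_sum
      intro j hj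
      simp only [Finset.mem_filter, Finset.mem_univ, true_and] at hj
      exact hcon j (by omega) (by omega)
    have hsu := psum_split u (show s - 1 ≤ t by omega)
    have hsv := psum_split (fun k : Fin n => σ (k + 1) - σ k) (show s - 1 ≤ t by omega)
    have h1 : α t ≤ psum u t := (hu t (by omega) htn).1
    have h2 : psum u (s - 1) ≤ β (s - 1) := by
      rcases Nat.eq_zero_or_pos (s - 1) with h | h
      · rw [h, psum_zero]; omega
      · exact (hu (s - 1) h (by omega)).2
    have h3 : psum (fun k : Fin n => σ (k + 1) - σ k) t = α t - 1 := by
      rw [hpsum t htn, hσ3 t le_rfl]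
    have h4 : psum (fun k : Fin n => σ (k + 1) - σ k) (s - 1) = β (s - 1) := by
      rw [hpsum (s - 1) (by omega), hσ1 (s - 1) (by omega)]
    beta_reduce at hsv hle
    omega


end Comb

section Alg
variable {K : Type*} [Field K] {n : ℕ}
/-- product formula for monomials over all variables -/
lemma prod_X_pow_univ (w : Fin n →₀ ℕ) :
    ∏ i : Fin n, (X i : MvPolynomial (Fin n) K) ^ w i = monomial w 1 := by
  rw [← prod_X_pow_eq_monomial]
  exact (Finset.prod_subset (Finset.subset_univ _) (fun i _ hi => by
    rw [Finsupp.notMem_support_iff.mp hi, pow_zero])).symm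

section kill
variable (T : Set (Fin n)) [DecidablePred (· ∈ T)]

noncomputable def kill : MvPolynomial (Fin n) K →ₐ[K] MvPolynomial (Fin n) K :=
  aeval (fun i => if i ∈ T then 0 else X i)

lemma kill_monomial (v : Fin n →₀ ℕ) (c : K) :
    kill T (monomial v c) =
      if ∀ i ∈ T, v i = 0 then monomial v c else 0 := by
  classical
  rw [kill, aeval_monomial]
  split_ifs with h
  · have he : ∀ i ∈ v.support, (if i ∈ T then 0 else (X i : MvPolynomial (Fin n) K)) ^ v i
        = X i ^ v i := by
      intro i hi
      rw [if_neg (fun hiT => (Finsupp.mem_support_iff.mp hi) (h i hiT))]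
    rw [Finsupp.prod, Finset.prod_congr rfl he, prod_X_pow_eq_monomial,
      algebraMap_eq, C_mul_monomial, mul_one]
  · push_neg at h
    obtain ⟨i0, hi0, hv0⟩ := h
    rw [Finsupp.prod, Finset.prod_eq_zero (Finsupp.mem_support_iff.mpr hv0)
      (by rw [if_pos hi0, zero_pow hv0]), mul_zero]

lemma coeff_kill (f : MvPolynomial (Fin n) K) (m : Fin n →₀ ℕ) (hm : ∀ i ∈ T, m i = 0) :
    coeff m (kill T f) = coeff m f := by
  classical
  conv_lhs => rw [f.as_sum]
  conv_rhs => rw [f.as_sum]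
  rw [map_sum, coeff_sum, coeff_sum]
  apply Finset.sum_congr rfl
  intro v _
  rw [kill_monomial]
  split_ifs with h
  · rfl
  · push_neg at h
    obtain ⟨i0, hi0, hv0⟩ := h
    rw [coeff_zero, coeff_monomial, if_neg]
    intro hvm
    exact hv0 (hvm ▸ hm i0 hi0)

lemma mem_span_X_iff_kill (f : MvPolynomial (Fin n) K) :
    f ∈ Ideal.span ((fun i => (X i : MvPolynomial (Fin n) K)) '' T) ↔ kill T f = 0 := by
  constructor
  · intro hf
    have hle : Ideal.span ((fun i => (X i : MvPolynomial (Fin n) K)) '' T)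
        ≤ RingHom.ker (kill (K := K) T).toRingHom := by
      rw [Ideal.span_le]
      rintro x ⟨i, hi, rfl⟩
      rw [SetLike.mem_coe, RingHom.mem_ker]
      show kill T (X i) = 0
      rw [kill, aeval_X, if_pos hi]
    exact hle hf
  · intro h0
    rw [mem_ideal_span_X_image]
    intro m hm
    by_contra hc
    push_neg at hc
    have := coeff_kill T f m hc
    rw [h0, coeff_zero] at this
    exact (MvPolynomial.mem_support_iff.mp hm) this.symm

end kill

lemma span_X_isPrime (T : Set (Fin n)) :
    (Ideal.span ((fun i => (X i : MvPolynomial (Fin n) K)) '' T)).IsPrime := by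
  classical
  rw [Ideal.isPrime_iff]
  constructor
  · rw [Ideal.ne_top_iff_one]
    intro h1
    rw [mem_span_X_iff_kill, map_one] at h1
    exact one_ne_zero h1
  · intro f g hfg
    rw [mem_span_X_iff_kill, map_mul] at hfg
    rw [mem_span_X_iff_kill, mem_span_X_iff_kill]
    exact mul_eq_zero.mp hfg

lemma X_mem_span_X_iff (T : Set (Fin n)) (j : Fin n) :
    (X j : MvPolynomial (Fin n) K) ∈
      Ideal.span ((fun i => (X i : MvPolynomial (Fin n) K)) '' T) ↔ j ∈ T := by
  constructor
  · intro h
    rw [mem_ideal_span_X_image] at h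
    obtain ⟨i, hi, hne⟩ := h (Finsupp.single j 1) (by
      rw [support_X]; exact Finset.mem_singleton_self _)
    have : j = i := by
      by_contra hji
      exact hne (Finsupp.single_eq_of_ne' hji)
    exact this ▸ hi
  · intro h
    exact Ideal.subset_span ⟨j, h, rfl⟩

lemma mem_ann_iff (I : Ideal (MvPolynomial (Fin n) K)) (f g : MvPolynomial (Fin n) K) :
    g ∈ (Submodule.span (MvPolynomial (Fin n) K)
        {Ideal.Quotient.mk I f} : Submodule (MvPolynomial (Fin n) K)
          (MvPolynomial (Fin n) K ⧸ I)).annihilator ↔ g * f ∈ I := by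
  rw [Submodule.mem_annihilator_span_singleton]
  rw [show g • Ideal.Quotient.mk I f = Ideal.Quotient.mk I (g * f) from rfl]
  exact Ideal.Quotient.eq_zero_iff_mem

lemma mem_support_mul_monomial (f : MvPolynomial (Fin n) K) (v m : Fin n →₀ ℕ)
    (hm : m ∈ f.support) : m + v ∈ (f * monomial v (1 : K)).support := by
  classical
  rw [MvPolynomial.mem_support_iff, coeff_mul_monomial, mul_one]
  exact MvPolynomial.mem_support_iff.mp hm

lemma X_mul_monomial (j : Fin n) (u : Finsupp (Fin n) ℕ) :
    (X j : MvPolynomial (Fin n) K) * monomial u 1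
      = monomial (u + Finsupp.single j 1) 1 := by
  rw [X, monomial_mul, one_mul, add_comm]


lemma memI_iff (I : Ideal (MvPolynomial (Fin n) K)) (U : Set (Fin n →₀ ℕ))
    (hUI : I = Ideal.span ((fun s => monomial s (1 : K)) '' U))
    (g : MvPolynomial (Fin n) K) :
    g ∈ I ↔ ∀ m ∈ g.support, ∃ w ∈ U, w ≤ m := by
  rw [hUI]; exact mem_ideal_span_monomial_image

lemma monomial_memI_iff (I : Ideal (MvPolynomial (Fin n) K)) (U : Set (Fin n →₀ ℕ))
    (hUI : I = Ideal.span ((fun s => monomial s (1 : K)) '' U)) (m : Fin n →₀ ℕ) :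
    monomial m (1 : K) ∈ I ↔ ∃ w ∈ U, w ≤ m := by
  classical
  rw [memI_iff I U hUI]
  constructor
  · intro h
    exact h m (by rw [support_monomial, if_neg one_ne_zero]; exact Finset.mem_singleton_self m)
  · intro h m' hm'
    rw [support_monomial, if_neg one_ne_zero, Finset.mem_singleton] at hm'
    exact hm' ▸ h

lemma exists_monomial_witness (I : Ideal (MvPolynomial (Fin n) K)) (U : Set (Fin n →₀ ℕ))
    (hUI : I = Ideal.span ((fun s => monomial s (1 : K)) '' U)) (T : Set (Fin n))
    (hP : IsAssociatedPrime (Ideal.span ((fun i => (X i : MvPolynomial (Fin n) K)) '' T))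
      (MvPolynomial (Fin n) K ⧸ I)) :
    ∃ u : Fin n →₀ ℕ, (¬ ∃ w ∈ U, w ≤ u) ∧
      ∀ j : Fin n, (j ∈ T ↔ ∃ w ∈ U, w ≤ u + Finsupp.single j 1) := by
  classical
  obtain ⟨hprime, x, hx⟩ := (isAssociatedPrime_iff.mp hP).imp id
    (fun h => h.imp fun x hx => hx.trans Submodule.bot_colon')
  obtain ⟨f, rfl⟩ := Ideal.Quotient.mk_surjective x
  set P := Ideal.span ((fun i => (X i : MvPolynomial (Fin n) K)) '' T) with hPdef
  set Jann : (Fin n →₀ ℕ) → Ideal (MvPolynomial (Fin n) K) := fun u =>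
    (Submodule.span _ {Ideal.Quotient.mk I (monomial u 1)}).annihilator with hJann
  have hPJ : ∀ u ∈ f.support, P ≤ Jann u := by
    intro u hu
    rw [hPdef, Ideal.span_le]
    rintro y ⟨j, hj, rfl⟩
    rw [SetLike.mem_coe, hJann, mem_ann_iff, X_mul_monomial,
      monomial_memI_iff I U hUI]
    have hXf : X j * f ∈ I := by
      rw [← mem_ann_iff I f (X j), ← hx]
      exact Ideal.subset_span ⟨j, hj, rfl⟩
    rw [memI_iff I U hUI] at hXf
    refine hXf (u + Finsupp.single j 1) ?_
    have h1 := mem_support_mul_monomial f (Finsupp.single j 1) u hu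
    have h2 : X j * f = f * monomial (Finsupp.single j 1) (1 : K) := mul_comm _ _
    rw [← h2] at h1
    exact h1
  have hinf : f.support.inf Jann ≤ P := by
    intro g hg
    rw [Submodule.mem_finsetInf] at hg
    have hgf : g * f ∈ I := by
      rw [f.as_sum, Finset.mul_sum]
      apply Ideal.sum_mem
      intro u hu
      have h1 : g * monomial u (1 : K) ∈ I := by
        have h2 := hg u hu
        rw [hJann, mem_ann_iff] at h2
        exact h2
      have h3 : monomial u (coeff u f) = C (coeff u f) * monomial u 1 := by
        rw [C_mul_monomial, mul_one]
      rw [h3, show g * (C (coeff u f) * monomial u 1)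
          = C (coeff u f) * (g * monomial u 1) from by ring]
      exact Ideal.mul_mem_left _ _ h1
    rw [hx, mem_ann_iff]
    exact hgf
  obtain ⟨u0, hu0, hle⟩ := (hprime.prod_le).mp (le_trans Ideal.prod_le_inf hinf)
  have hPeq : P = Jann u0 := le_antisymm (hPJ u0 hu0) hle
  refine ⟨u0, ?_, ?_⟩
  · rintro ⟨w, hw, hwle⟩
    have h1 : (1 : MvPolynomial (Fin n) K) ∈ Jann u0 := by
      rw [hJann, mem_ann_iff, one_mul, monomial_memI_iff I U hUI]
      exact ⟨w, hw, hwle⟩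
    rw [← hPeq] at h1
    exact hprime.ne_top ((Ideal.eq_top_iff_one P).mpr h1)
  · intro j
    rw [← X_mem_span_X_iff (K := K) T j, ← hPdef, hPeq, hJann, mem_ann_iff, X_mul_monomial,
      monomial_memI_iff I U hUI]


/-- assembling an associated prime from a monomial witness -/
lemma backward_assemble (I : Ideal (MvPolynomial (Fin n) K)) (U : Set (Fin n →₀ ℕ))
    (hUI : I = Ideal.span ((fun s => monomial s (1 : K)) '' U)) (T : Set (Fin n))
    (v' : Fin n →₀ ℕ)
    (h1 : ∀ j ∈ T, v' + Finsupp.single j 1 ∈ U)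
    (h3 : ∀ w ∈ U, ∀ m : Fin n →₀ ℕ, w ≤ m + v' → ∃ j ∈ T, m j ≠ 0) :
    Ideal.span ((fun i => (X i : MvPolynomial (Fin n) K)) '' T) ∈
      associatedPrimes (MvPolynomial (Fin n) K) (MvPolynomial (Fin n) K ⧸ I) := by
  refine isAssociatedPrime_iff.mpr ⟨span_X_isPrime T, Ideal.Quotient.mk I (monomial v' 1), ?_⟩
  rw [Submodule.bot_colon']
  apply le_antisymm
  · rw [Ideal.span_le]
    rintro y ⟨j, hj, rfl⟩
    rw [SetLike.mem_coe, mem_ann_iff, X_mul_monomial, monomial_memI_iff I U hUI]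
    exact ⟨v' + Finsupp.single j 1, h1 j hj, le_rfl⟩
  · intro g hg
    rw [mem_ann_iff I _ g, memI_iff I U hUI] at hg
    rw [mem_ideal_span_X_image]
    intro m hm
    obtain ⟨w, hw, hwle⟩ := hg (m + v') (mem_support_mul_monomial g v' m hm)
    exact h3 w hw m hwle

/-- generating set rewriting -/
lemma gen_set_eq (C : (Fin n → ℕ) → Prop) :
    { m : MvPolynomial (Fin n) K | ∃ u : Fin n → ℕ, C u ∧ m = ∏ i, X i ^ u i }
      = (fun s => monomial s (1 : K)) '' { w : Fin n →₀ ℕ | C ⇑w } := by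
  ext m
  simp only [Set.mem_setOf_eq, Set.mem_image]
  constructor
  · rintro ⟨u, hu, rfl⟩
    have hcoe : ⇑(Finsupp.equivFunOnFinite.symm u) = u :=
      Finsupp.equivFunOnFinite.apply_symm_apply u
    refine ⟨Finsupp.equivFunOnFinite.symm u, show C _ from by rw [hcoe]; exact hu, ?_⟩
    rw [← prod_X_pow_univ]
    exact Finset.prod_congr rfl (fun i _ => by rw [hcoe])
  · rintro ⟨w, hw, rfl⟩
    exact ⟨⇑w, hw, (prod_X_pow_univ w).symm⟩

/-- coercion of `v' + single j 1` -/
lemma psum_coe_add_single (v' w : Fin n →₀ ℕ) (j : Fin n)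
    (hw : w = v' + Finsupp.single j 1) (i : ℕ) :
    _root_.psum ⇑w i = _root_.psum ⇑v' i + (if (j : ℕ) + 1 ≤ i then 1 else 0) := by
  classical
  unfold _root_.psum
  have hc : ∀ k : Fin n, w k = v' k + (if k = j then 1 else 0) := by
    intro k
    rw [hw, Finsupp.add_apply, Finsupp.single_apply]
    congr 1
    simp [eq_comm]
  rw [Finset.sum_congr rfl (fun k _ => hc k), Finset.sum_add_distrib]
  congr 1
  rw [Finset.sum_ite_eq' (Finset.univ.filter (fun k : Fin n => (k : ℕ) < i)) j
    (fun _ => 1)]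
  simp only [Finset.mem_filter, Finset.mem_univ, true_and]
  by_cases h : (j : ℕ) < i
  · rw [if_pos h, if_pos (by omega)]
  · rw [if_neg h, if_neg (by omega)]


end Alg

end LPaux

/-- characterization of the associated primes `P_{[s,t]}` of an
LP-polymatroidal ideal of type `(α,β)` (with the convention `α_0 = β_0 = 0`);
in particular `(x_t) ∈ Ass(S/I)` iff `α_t > β_{t−1}`. -/
theorem LP_ass_characterization {n : ℕ} (K : Type*) [Field K] (hn : 0 < n) {d : ℕ} (hd : 0 < d)
    (α β : ℕ → ℕ) (hα0 : α 0 = 0) (hβ0 : β 0 = 0)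
    (hαm : ∀ i, i < n → α i ≤ α (i + 1)) (hβm : ∀ i, i < n → β i ≤ β (i + 1))
    (hαn : α n = d) (hβn : β n = d)
    (hαβ : ∀ i, i ≤ n → α i ≤ β i)
    (I : Ideal (MvPolynomial (Fin n) K))
    (hI : I = Ideal.span { m : MvPolynomial (Fin n) K | ∃ u : Fin n → ℕ,
      (∀ i : ℕ, 1 ≤ i → i ≤ n → α i ≤ psum u i ∧ psum u i ≤ β i) ∧
      m = ∏ i, (X i : MvPolynomial (Fin n) K) ^ u i }) :
    (∀ s t : ℕ, 1 ≤ s → s ≤ t → t ≤ n →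
      (Ideal.span ((fun i => (X i : MvPolynomial (Fin n) K)) ''
          { i : Fin n | s ≤ (i : ℕ) + 1 ∧ (i : ℕ) + 1 ≤ t }) ∈
        associatedPrimes (MvPolynomial (Fin n) K) (MvPolynomial (Fin n) K ⧸ I) ↔
      (∀ i : ℕ, s ≤ i → i < t → α i < β i) ∧
        β (s - 1) < β s ∧ β (s - 1) < α t ∧ α (t - 1) < α t)) ∧
    (∀ t : ℕ, 1 ≤ t → t ≤ n →
      (Ideal.span ((fun i => (X i : MvPolynomial (Fin n) K)) ''
          { i : Fin n | (i : ℕ) + 1 = t }) ∈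
        associatedPrimes (MvPolynomial (Fin n) K) (MvPolynomial (Fin n) K ⧸ I) ↔
      β (t - 1) < α t)) := by
  classical
  have key : ∀ s t : ℕ, 1 ≤ s → s ≤ t → t ≤ n →
      (Ideal.span ((fun i => (X i : MvPolynomial (Fin n) K)) ''
          { i : Fin n | s ≤ (i : ℕ) + 1 ∧ (i : ℕ) + 1 ≤ t }) ∈
        associatedPrimes (MvPolynomial (Fin n) K) (MvPolynomial (Fin n) K ⧸ I) ↔
      (∀ i : ℕ, s ≤ i → i < t → α i < β i) ∧
        β (s - 1) < β s ∧ β (s - 1) < α t ∧ α (t - 1) < α t) := by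
    intro s t hs hst htn
    set U : Set (Fin n →₀ ℕ) := { w : Fin n →₀ ℕ |
      ∀ i : ℕ, 1 ≤ i → i ≤ n →
        α i ≤ _root_.psum ⇑w i ∧ _root_.psum ⇑w i ≤ β i } with hUdef
    have hUI : I = Ideal.span ((fun s => monomial s (1 : K)) '' U) :=
      hI.trans (congrArg Ideal.span (LPaux.gen_set_eq
        (fun u => ∀ i : ℕ, 1 ≤ i → i ≤ n →
          α i ≤ _root_.psum u i ∧ _root_.psum u i ≤ β i)))
    set T : Set (Fin n) := { i : Fin n | s ≤ (i : ℕ) + 1 ∧ (i : ℕ) + 1 ≤ t } with hTdef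
    have hbridge : ∀ m : Fin n →₀ ℕ, (∃ w ∈ U, w ≤ m) ↔
        ∀ a b : ℕ, a ≤ b → b ≤ n →
          α b + _root_.psum ⇑m a ≤ β a + _root_.psum ⇑m b := by
      intro m
      rw [← LPaux.dom_iff hα0 hβ0 hαm hβm hαn hβn hαβ ⇑m]
      constructor
      · rintro ⟨w, hw, hwle⟩
        exact ⟨⇑w, hw, fun j => (Finsupp.le_def.mp hwle) j⟩
      · rintro ⟨u', hu', hle⟩
        have hcoe : ⇑(Finsupp.equivFunOnFinite.symm u') = u' :=
          Finsupp.equivFunOnFinite.apply_symm_apply u'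
        refine ⟨Finsupp.equivFunOnFinite.symm u', ?_, ?_⟩
        · simp only [hUdef, Set.mem_setOf_eq, hcoe]
          exact hu'
        · rw [Finsupp.le_def]
          intro j
          rw [hcoe]
          exact hle j
    constructor
    · intro hass
      obtain ⟨u0, hnot, hiff⟩ := LPaux.exists_monomial_witness I U hUI T hass
      refine LPaux.forward_comb (α := α) (β := β) (_root_.psum ⇑u0)
        (LPaux.psum_mono ⇑u0) hs hst htn ?_ ?_ ?_
      · intro hE
        exact hnot ((hbridge u0).mpr hE)
      · intro J hsJ hJt a b hab hbn
        have hjlt : J - 1 < n := by omega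
        have hjT : (⟨J - 1, hjlt⟩ : Fin n) ∈ T := by
          simp only [hTdef, Set.mem_setOf_eq, Fin.val_mk]
          omega
        have hE := (hbridge _).mp ((hiff ⟨J - 1, hjlt⟩).mp hjT) a b hab hbn
        rw [LPaux.psum_coe_add_single u0 _ ⟨J - 1, hjlt⟩ rfl a,
          LPaux.psum_coe_add_single u0 _ ⟨J - 1, hjlt⟩ rfl b,
          show ((⟨J - 1, hjlt⟩ : Fin n) : ℕ) + 1 = J from by
            rw [Fin.val_mk]; omega] at hE
        exact hE
      · intro J hJ1 hJn hJst hEall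
        have hjlt : J - 1 < n := by omega
        have hjT : (⟨J - 1, hjlt⟩ : Fin n) ∉ T := by
          simp only [hTdef, Set.mem_setOf_eq, Fin.val_mk]
          omega
        apply hjT
        rw [hiff ⟨J - 1, hjlt⟩]
        apply (hbridge _).mpr
        intro a b hab hbn
        rw [LPaux.psum_coe_add_single u0 _ ⟨J - 1, hjlt⟩ rfl a,
          LPaux.psum_coe_add_single u0 _ ⟨J - 1, hjlt⟩ rfl b,
          show ((⟨J - 1, hjlt⟩ : Fin n) : ℕ) + 1 = J from by
            rw [Fin.val_mk]; omega]
        exact hEall a b hab hbn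
    · rintro ⟨hA, hB, hC, hD⟩
      obtain ⟨v, hP2, hP1, hP3⟩ := LPaux.backward_comb hα0 hβ0 hαm hβm hαn hβn hαβ
        hs hst htn hA hB hC hD
      have hcoe : ⇑(Finsupp.equivFunOnFinite.symm v) = v :=
        Finsupp.equivFunOnFinite.apply_symm_apply v
      apply LPaux.backward_assemble I U hUI T (Finsupp.equivFunOnFinite.symm v)
      · intro j hjT
        have hjT' : s ≤ (j : ℕ) + 1 ∧ (j : ℕ) + 1 ≤ t := hjT
        simp only [hUdef, Set.mem_setOf_eq]
        intro i h1 hin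
        rw [LPaux.psum_coe_add_single _ _ j rfl i, hcoe]
        exact hP2 ((j : ℕ) + 1) hjT'.1 hjT'.2 i h1 hin
      · intro w hw m hwle
        obtain ⟨j, hj1, hj2, hlt⟩ := hP3 ⇑w hw
        refine ⟨j, show s ≤ (j : ℕ) + 1 ∧ (j : ℕ) + 1 ≤ t from ⟨hj1, hj2⟩, ?_⟩
        have h5 := (Finsupp.le_def.mp hwle) j
        rw [Finsupp.add_apply] at h5
        have h6 : (Finsupp.equivFunOnFinite.symm v) j = v j := congrFun hcoe j
        omega
  refine ⟨key, ?_⟩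
  intro t ht1 htn
  have hset : { i : Fin n | (i : ℕ) + 1 = t }
      = { i : Fin n | t ≤ (i : ℕ) + 1 ∧ (i : ℕ) + 1 ≤ t } := by
    ext i
    simp only [Set.mem_setOf_eq]
    omega
  rw [hset, key t t ht1 le_rfl htn]
  constructor
  · rintro ⟨_, _, h, _⟩
    exact h
  · intro h
    refine ⟨fun i h1 h2 => by omega, ?_, h, ?_⟩
    · have := hαβ t htn
      omega
    · have := hαβ (t - 1) (by omega)
      omega
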